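/- For every integer n ≥ 0, as polynomials in two variables x and y over the rationals, (∏_{a=1}^{n}(x - a) - ∏_{a=1}^{n}(y - a)) / (x - y) = ∑_{k=0}^{n-1} C(n,k) * ∏_{a=1}^{k}((k+1)/(n+1) * y - a) * ∏_{a=1}^{n-1-k}(x - (k+1)/(n+1) * y - a). Equivalently, multiplying through by (x-y): ∏_{a=1}^{n}(x-a) - ∏_{a=1}^{n}(y-a) = (x-y) * ∑_{k=0}^{n-1} C(n,k) * ∏_{a=1}^{k}((k+1)y/(n+1) - a) * ∏_{a=1}^{n-1-k}(x - (k+1)y/(n+1) - a). -/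

import Mathlib

namespace KeyAux
open Polynomial Finset

noncomputable def Bp (t : ℚ) (m : ℕ) : Polynomial ℚ :=
  ∏ a ∈ Finset.range m, (Polynomial.X - Polynomial.C (t + (a : ℚ) + 1))

def Pv (s : ℚ) (m : ℕ) : ℚ := ∏ a ∈ Finset.range m, (s - ((a : ℚ) + 1))

noncomputable def Sn (w z : ℚ) (m : ℕ) : Polynomial ℚ :=
  ∑ k ∈ Finset.range m,
    Polynomial.C ((m.choose k : ℚ) * Pv (w + k * z) k) * Bp (w + k * z) (m - 1 - k)

lemma Bp_succ (t : ℚ) (m : ℕ) :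
    Bp t (m + 1) = Bp t m * (Polynomial.X - Polynomial.C (t + (m : ℚ) + 1)) := by
  rw [Bp, Bp, Finset.prod_range_succ]

lemma Bp_eval (t x : ℚ) (m : ℕ) : (Bp t m).eval x = Pv (x - t) m := by
  rw [Bp, Polynomial.eval_prod, Pv]
  refine Finset.prod_congr rfl fun a _ => ?_
  simp only [Polynomial.eval_sub, Polynomial.eval_X, Polynomial.eval_C]
  ring

lemma Bp_delta (t : ℚ) (m : ℕ) :
    (Bp t (m + 1)).comp (Polynomial.X + 1) =
      Bp t (m + 1) + Polynomial.C ((m : ℚ) + 1) * Bp t m := by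
  have hcomp : (Bp t (m+1)).comp (Polynomial.X + 1) =
      ∏ a ∈ Finset.range (m+1), (Polynomial.X - Polynomial.C (t + (a : ℚ))) := by
    rw [Bp, Polynomial.prod_comp]
    refine Finset.prod_congr rfl fun a _ => ?_
    rw [Polynomial.sub_comp, Polynomial.X_comp, Polynomial.C_comp]
    rw [show t + (a : ℚ) + 1 = (t + a) + 1 by ring, Polynomial.C_add, Polynomial.C_1]
    ring
  rw [hcomp, Finset.prod_range_succ']
  have h2 : ∀ a ∈ Finset.range m,
      Polynomial.X - Polynomial.C (t + ((a + 1 : ℕ) : ℚ)) =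
      Polynomial.X - Polynomial.C (t + (a : ℚ) + 1) := by
    intro a _; push_cast; ring_nf
  rw [Finset.prod_congr rfl h2]
  rw [← Bp, Bp_succ]
  simp only [Nat.cast_zero, add_zero, Polynomial.C_add, Polynomial.C_1]
  ring

lemma key (w z : ℚ) : ∀ n : ℕ,
    Bp 0 n = (Polynomial.X - Polynomial.C (w + (n : ℚ) * z)) * Sn w z n +
      Polynomial.C (Pv (w + (n : ℚ) * z) n) := by
  intro n
  induction n with
  | zero => simp [Bp, Sn, Pv]
  | succ n ih =>
    set s : ℚ := w + ((n + 1 : ℕ) : ℚ) * z with hs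
    have hs' : s = w + ((n : ℚ) + 1) * z := by rw [hs]; push_cast; ring
    -- the core summation identity
    have hsum : (Polynomial.X + 1 - Polynomial.C s) *
          ((Sn w z (n+1)).comp (Polynomial.X + 1) - Sn w z (n+1)) + Sn w z (n+1)
        = Polynomial.C ((n : ℚ) + 1) *
            ((Polynomial.X - Polynomial.C (w + (n : ℚ) * z)) * Sn w z n +
              Polynomial.C (Pv (w + (n : ℚ) * z) n)) := by
      have expand : (Polynomial.X + 1 - Polynomial.C s) *
            ((Sn w z (n+1)).comp (Polynomial.X + 1) - Sn w z (n+1)) + Sn w z (n+1)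
          = ∑ k ∈ Finset.range (n+1),
              (Polynomial.C (((n+1).choose k : ℚ) * Pv (w + k * z) k) *
                ((Polynomial.X + 1 - Polynomial.C s) *
                  ((Bp (w + k * z) (n - k)).comp (Polynomial.X + 1) - Bp (w + k * z) (n - k)) +
                  Bp (w + k * z) (n - k))) := by
        have hrw : Sn w z (n+1) = ∑ k ∈ Finset.range (n+1),
            Polynomial.C (((n+1).choose k : ℚ) * Pv (w + k * z) k) * Bp (w + k * z) (n - k) := by
          rw [Sn]; simp only [Nat.add_sub_cancel]
        rw [hrw, Polynomial.sum_comp]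
        simp only [Polynomial.mul_comp, Polynomial.C_comp]
        rw [← Finset.sum_sub_distrib, Finset.mul_sum, ← Finset.sum_add_distrib]
        refine Finset.sum_congr rfl fun k _ => by ring
      rw [expand, Finset.sum_range_succ]
      -- boundary term k = n
      have hbound : Polynomial.C (((n+1).choose n : ℚ) * Pv (w + n * z) n) *
          ((Polynomial.X + 1 - Polynomial.C s) *
            ((Bp (w + n * z) (n - n)).comp (Polynomial.X + 1) - Bp (w + n * z) (n - n)) +
            Bp (w + n * z) (n - n))
          = Polynomial.C (((n : ℚ) + 1) * Pv (w + (n : ℚ) * z) n) := by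
        rw [Nat.sub_self]
        have h1 : Bp (w + n * z) 0 = 1 := by rw [Bp, Finset.prod_range_zero]
        rw [h1, Polynomial.one_comp, Nat.choose_succ_self_right]
        push_cast
        ring
      rw [hbound]
      -- rewrite the RHS as a sum plus a constant
      have hrhs : Polynomial.C ((n : ℚ) + 1) *
            ((Polynomial.X - Polynomial.C (w + (n : ℚ) * z)) * Sn w z n +
              Polynomial.C (Pv (w + (n : ℚ) * z) n))
          = (∑ k ∈ Finset.range n,
              Polynomial.C (((n : ℚ) + 1) * ((n.choose k : ℚ) * Pv (w + k * z) k)) *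
                ((Polynomial.X - Polynomial.C (w + (n : ℚ) * z)) * Bp (w + k * z) (n - 1 - k)))
            + Polynomial.C (((n : ℚ) + 1) * Pv (w + (n : ℚ) * z) n) := by
        rw [Sn, mul_add, ← Polynomial.C_mul, Finset.mul_sum, Finset.mul_sum]
        refine congrArg₂ (· + ·) ?_ rfl
        refine Finset.sum_congr rfl fun k _ => ?_
        simp only [Polynomial.C_mul, Polynomial.C_add, Polynomial.C_1]
        ring
      rw [hrhs]
      refine congrArg₂ (· + ·) ?_ rfl
      refine Finset.sum_congr rfl fun k hk => ?_
      have hkn : k < n := Finset.mem_range.mp hk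
      have hnk : n - k = (n - 1 - k) + 1 := by omega
      rw [hnk, Bp_delta, Bp_succ]
      have hM : ((n - 1 - k : ℕ) : ℚ) = (n : ℚ) - 1 - k := by
        have h : n - 1 - k = n - (1 + k) := by omega
        rw [h, Nat.cast_sub (by omega)]
        push_cast; ring
      -- scalar coefficient identity
      have hc : (((n+1).choose k : ℚ)) * (((n - 1 - k : ℕ) : ℚ) + 2)
          = ((n : ℚ) + 1) * ((n.choose k : ℚ)) := by
        have h := Nat.choose_mul_succ_eq n k
        have h2 : ((n.choose k * (n+1) : ℕ) : ℚ) = (((n+1).choose k * (n+1-k) : ℕ) : ℚ) := by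
          exact_mod_cast congrArg (fun t : ℕ => (t : ℚ)) h
        push_cast [Nat.cast_sub (show k ≤ n + 1 by omega)] at h2
        rw [hM]
        linarith [h2]
      -- bracket identity
      have hbr : Polynomial.C (((n - 1 - k : ℕ) : ℚ) + 1) * (Polynomial.X + 1 - Polynomial.C s) +
          (Polynomial.X - Polynomial.C (w + (k : ℚ) * z + ((n - 1 - k : ℕ) : ℚ) + 1)) =
          Polynomial.C (((n - 1 - k : ℕ) : ℚ) + 2) *
            (Polynomial.X - Polynomial.C (w + (n : ℚ) * z)) := by
        rw [hM, hs']
        simp only [map_add, map_sub, map_mul, map_one, map_ofNat, Polynomial.C_1]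
        ring
      have hcoC : Polynomial.C (((n+1).choose k : ℚ) * Pv (w + k * z) k) *
            Polynomial.C (((n - 1 - k : ℕ) : ℚ) + 2)
          = Polynomial.C (((n : ℚ) + 1) * ((n.choose k : ℚ) * Pv (w + k * z) k)) := by
        rw [← Polynomial.C_mul]
        congr 1
        linear_combination Pv (w + (k : ℚ) * z) k * hc
      linear_combination
        (Polynomial.C (((n+1).choose k : ℚ) * Pv (w + k * z) k) * Bp (w + k * z) (n - 1 - k)) * hbr
        + ((Polynomial.X - Polynomial.C (w + (n : ℚ) * z)) * Bp (w + k * z) (n - 1 - k)) * hcoC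
    -- now the difference argument
    set L : Polynomial ℚ := Bp 0 (n+1) - (Polynomial.X - Polynomial.C s) * Sn w z (n+1) -
      Polynomial.C (Pv s (n+1)) with hLdef
    have hF := Bp_delta 0 n
    have hLcomp : L.comp (Polynomial.X + 1) = L := by
      rw [hLdef, Polynomial.sub_comp, Polynomial.sub_comp, Polynomial.mul_comp,
        Polynomial.sub_comp, Polynomial.X_comp, Polynomial.C_comp, Polynomial.C_comp, hF]
      linear_combination (-1 : Polynomial ℚ) * hsum + Polynomial.C ((n : ℚ) + 1) * ih
    have heval : ∀ m : ℕ, L.eval (s + m) = 0 := by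
      intro m
      induction m with
      | zero =>
        simp only [Nat.cast_zero, add_zero, hLdef]
        simp only [Polynomial.eval_sub, Polynomial.eval_mul, Polynomial.eval_X,
          Polynomial.eval_C, sub_self, zero_mul]
        rw [Bp_eval, sub_zero]
        ring
      | succ m ihm =>
        have hcast : s + ((m + 1 : ℕ) : ℚ) = (s + m) + 1 := by push_cast; ring
        rw [hcast]
        have : L.eval ((s + m) + 1) = (L.comp (Polynomial.X + 1)).eval (s + m) := by
          rw [Polynomial.eval_comp]; simp
        rw [this, hLcomp, ihm]
    have hinj : Function.Injective (fun m : ℕ => s + (m : ℚ)) := by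
      intro a b hab
      simp only at hab
      have : (a : ℚ) = b := by linarith
      exact_mod_cast this
    have hL0 : L = 0 :=
      Polynomial.eq_zero_of_infinite_isRoot L
        (Set.infinite_of_injective_forall_mem hinj (fun m => heval m))
    rw [hLdef] at hL0
    linear_combination hL0

lemma scalar_key (n : ℕ) (x y : ℚ) :
    Pv x n - Pv y n = (x - y) * ∑ k ∈ Finset.range n,
      (n.choose k : ℚ) * Pv (((k : ℚ) + 1) / ((n : ℚ) + 1) * y) k *
        ∏ a ∈ Finset.range (n - 1 - k),
          (x - ((k : ℚ) + 1) / ((n : ℚ) + 1) * y - ((a : ℚ) + 1)) := by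
  have hne : (n : ℚ) + 1 ≠ 0 := by positivity
  set w : ℚ := y / ((n : ℚ) + 1) with hw
  have hkey := congrArg (Polynomial.eval x) (key w w n)
  rw [Bp_eval, sub_zero] at hkey
  simp only [Polynomial.eval_add, Polynomial.eval_mul, Polynomial.eval_sub,
    Polynomial.eval_X, Polynomial.eval_C, Sn, Polynomial.eval_finset_sum,
    Bp_eval] at hkey
  have hwn : w + (n : ℚ) * w = y := by rw [hw]; field_simp; ring
  have hwk : ∀ k : ℕ, w + (k : ℚ) * w = ((k : ℚ) + 1) / ((n : ℚ) + 1) * y := by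
    intro k; rw [hw]; field_simp; ring
  rw [hwn] at hkey
  have hterm : ∀ k ∈ Finset.range n,
      (n.choose k : ℚ) * Pv (((k : ℚ) + 1) / ((n : ℚ) + 1) * y) k *
        ∏ a ∈ Finset.range (n - 1 - k),
          (x - ((k : ℚ) + 1) / ((n : ℚ) + 1) * y - ((a : ℚ) + 1))
      = (n.choose k : ℚ) * Pv (w + (k : ℚ) * w) k * Pv (x - (w + (k : ℚ) * w)) (n - 1 - k) := by
    intro k _
    rw [← hwk k]
    simp only [Pv]
  rw [Finset.sum_congr rfl hterm]
  linear_combination hkey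

end KeyAux


open MvPolynomial Finset

/-- `x` and `y` in `ℚ[x,y]`. -/
noncomputable def xP : MvPolynomial (Fin 2) ℚ := MvPolynomial.X 0
noncomputable def yP : MvPolynomial (Fin 2) ℚ := MvPolynomial.X 1

theorem key_polynomial_identity (n : ℕ) :
    (∏ a ∈ Finset.range n, (xP - C ((a : ℚ) + 1))) -
      (∏ a ∈ Finset.range n, (yP - C ((a : ℚ) + 1))) =
    (xP - yP) *
      ∑ k ∈ Finset.range n, C ((n.choose k : ℚ)) *
        (∏ a ∈ Finset.range k,
            (C (((k : ℚ) + 1) / ((n : ℚ) + 1)) * yP - C ((a : ℚ) + 1))) *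
        (∏ a ∈ Finset.range (n - 1 - k),
            (xP - C (((k : ℚ) + 1) / ((n : ℚ) + 1)) * yP - C ((a : ℚ) + 1))) := by
  apply MvPolynomial.funext
  intro f
  simp only [map_sub, map_mul, map_sum, map_prod, eval_X, eval_C, xP, yP]
  have h := KeyAux.scalar_key n (f 0) (f 1)
  simp only [KeyAux.Pv] at h
  rw [h]
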